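/- Let P be a finite poset with k points and height h (the maximal size of a chain in P is h, with h ≥ 1). Then d(P) ≤ 2^{k−h}·(h+1), and equality holds if and only if P is isomorphic to A_{k−h} + C_h, the disjoint sum of a (k−h)-element antichain and an h-element chain. -/

import Mathlib

open scoped Classical

variable {α : Type*} [DecidableEq α]

/-- `q` is a partial order relation with ground set `S`: it is a set of pairs
contained in `S × S`, reflexive on `S`, transitive and antisymmetric. -/
def IsPOon (S : Finset α) (q : Finset (α × α)) : Prop :=
  q ⊆ S ×ˢ S ∧ (∀ x ∈ S, (x, x) ∈ q) ∧
  (∀ x y z : α, (x, y) ∈ q → (y, z) ∈ q → (x, z) ∈ q) ∧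
  (∀ x y : α, (x, y) ∈ q → (y, x) ∈ q → x = y)

/-- The relation induced on a subset `A` of the ground set. -/
def restrictRel (q : Finset (α × α)) (A : Finset α) : Finset (α × α) :=
  q.filter fun r => r.1 ∈ A ∧ r.2 ∈ A

/-- The downsets of the poset `(S, q)`. -/
noncomputable def downsets (S : Finset α) (q : Finset (α × α)) : Finset (Finset α) :=
  S.powerset.filter fun D => ∀ y ∈ D, ∀ x : α, (x, y) ∈ q → x ∈ D

/-- `d(P)`, the number of downsets of the poset `(S, q)`. -/
noncomputable def dnum (S : Finset α) (q : Finset (α × α)) : ℕ :=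
  (downsets S q).card

/-- The upsets of the poset `(S, q)`. -/
noncomputable def upsets (S : Finset α) (q : Finset (α × α)) : Finset (Finset α) :=
  S.powerset.filter fun U => ∀ x ∈ U, ∀ y : α, (x, y) ∈ q → y ∈ U

/-- Down-closure `QA = {x : x ≤_Q a for some a ∈ A}`. -/
def dcl (q : Finset (α × α)) (A : Finset α) : Finset α :=
  (q.filter fun r => r.2 ∈ A).image Prod.fst

/-- Up-closure `AQ = {y : a ≤_Q y for some a ∈ A}`. -/
def ucl (q : Finset (α × α)) (A : Finset α) : Finset α :=
  (q.filter fun r => r.1 ∈ A).image Prod.snd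

/-- The set of minimal elements of the poset `(S, q)`. -/
noncomputable def minset (S : Finset α) (q : Finset (α × α)) : Finset α :=
  S.filter fun x => ∀ y : α, (y, x) ∈ q → y = x

/-- `E(M, P)`: the partial orders on `M ∪ K` inducing `p` on `K` whose set of
minimal elements is exactly `M`. -/
noncomputable def extPOs (M K : Finset α) (p : Finset (α × α)) :
    Finset (Finset (α × α)) :=
  ((M ∪ K) ×ˢ (M ∪ K)).powerset.filter fun q =>
    IsPOon (M ∪ K) q ∧ restrictRel q K = p ∧ minset (M ∪ K) q = M

/-- `A` is an antichain of the poset `(S, q)`. -/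
def isAntichain (S : Finset α) (q : Finset (α × α)) (A : Finset α) : Prop :=
  A ⊆ S ∧ ∀ x ∈ A, ∀ y ∈ A, (x, y) ∈ q → x = y

/-- The posets `(S, q)` and `(T, r)` are order-isomorphic. -/
def POIso {β : Type*} (S : Finset α) (q : Finset (α × α))
    (T : Finset β) (r : Finset (β × β)) : Prop :=
  ∃ f : α → β, Set.BijOn f ↑S ↑T ∧ ∀ x ∈ S, ∀ y ∈ S, ((x, y) ∈ q ↔ (f x, f y) ∈ r)

/-- `C` is a chain of the poset `(S, q)`. -/
def isChainOn (S : Finset α) (q : Finset (α × α)) (C : Finset α) : Prop :=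
  C ⊆ S ∧ ∀ x ∈ C, ∀ y ∈ C, (x, y) ∈ q ∨ (y, x) ∈ q

/-- The height of the poset `(S, q)`: the maximal size of a chain. -/
noncomputable def heightP (S : Finset α) (q : Finset (α × α)) : ℕ :=
  (S.powerset.filter (isChainOn S q)).sup Finset.card

section Aux
variable {α : Type*} [DecidableEq α]

set_option linter.unusedSectionVars false
set_option linter.unusedVariables false




noncomputable def initSegs (C : Finset α) (q : Finset (α × α)) : Finset (Finset α) :=
  C.powerset.filter fun I => ∀ y ∈ I, ∀ x ∈ C, (x, y) ∈ q → x ∈ I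

noncomputable def rankC (C : Finset α) (q : Finset (α × α)) (c : α) : ℕ :=
  (C.filter fun y => (y, c) ∈ q).card

lemma mem_downsets {S : Finset α} {q : Finset (α × α)} {D : Finset α} :
    D ∈ downsets S q ↔ D ⊆ S ∧ ∀ y ∈ D, ∀ x : α, (x, y) ∈ q → x ∈ D := by
  simp [downsets]

lemma mem_initSegs {C : Finset α} {q : Finset (α × α)} {I : Finset α} :
    I ∈ initSegs C q ↔ I ⊆ C ∧ ∀ y ∈ I, ∀ x ∈ C, (x, y) ∈ q → x ∈ I := by
  simp [initSegs]

section rank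

variable {S C : Finset α} {q : Finset (α × α)}

lemma chainRank_pos (hq : IsPOon S q) (hCS : C ⊆ S) {x : α} (hx : x ∈ C) :
    1 ≤ rankC C q x :=
  Finset.card_pos.2 ⟨x, Finset.mem_filter.2 ⟨hx, hq.2.1 x (hCS hx)⟩⟩

lemma chainRank_le_card {x : α} : rankC C q x ≤ C.card :=
  Finset.card_le_card (Finset.filter_subset _ _)

lemma chainRank_lt (hq : IsPOon S q) (hCS : C ⊆ S) {x y : α} (hx : x ∈ C) (hy : y ∈ C)
    (hxy : (x, y) ∈ q) (hne : x ≠ y) : rankC C q x < rankC C q y := by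
  apply Finset.card_lt_card
  have hsub : (C.filter fun z => (z, x) ∈ q) ⊆ C.filter fun z => (z, y) ∈ q := by
    intro z hz
    rw [Finset.mem_filter] at hz ⊢
    exact ⟨hz.1, hq.2.2.1 z x y hz.2 hxy⟩
  refine (Finset.ssubset_iff_of_subset hsub).2 ⟨y, ?_, ?_⟩
  · exact Finset.mem_filter.2 ⟨hy, hq.2.1 y (hCS hy)⟩
  · intro hmem
    exact hne (hq.2.2.2 x y hxy (Finset.mem_filter.1 hmem).2)

lemma chainRank_le_iff (hq : IsPOon S q) (hCS : C ⊆ S)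
    (hC : ∀ x ∈ C, ∀ y ∈ C, (x, y) ∈ q ∨ (y, x) ∈ q) {x y : α} (hx : x ∈ C) (hy : y ∈ C) :
    (x, y) ∈ q ↔ rankC C q x ≤ rankC C q y := by
  constructor
  · intro hxy
    rcases eq_or_ne x y with rfl | hne
    · exact le_refl _
    · exact (chainRank_lt hq hCS hx hy hxy hne).le
  · intro hle
    rcases eq_or_ne x y with rfl | hne
    · exact hq.2.1 x (hCS hx)
    · rcases hC x hx y hy with h | h
      · exact h
      · exact absurd hle (by simpa using chainRank_lt hq hCS hy hx h hne.symm)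

lemma chainRank_injOn (hq : IsPOon S q) (hCS : C ⊆ S)
    (hC : ∀ x ∈ C, ∀ y ∈ C, (x, y) ∈ q ∨ (y, x) ∈ q) {x y : α} (hx : x ∈ C) (hy : y ∈ C)
    (hr : rankC C q x = rankC C q y) : x = y := by
  have h1 : (x, y) ∈ q := (chainRank_le_iff hq hCS hC hx hy).2 hr.le
  have h2 : (y, x) ∈ q := (chainRank_le_iff hq hCS hC hy hx).2 hr.ge
  exact hq.2.2.2 x y h1 h2

lemma chainRank_image (hq : IsPOon S q) (hCS : C ⊆ S)
    (hC : ∀ x ∈ C, ∀ y ∈ C, (x, y) ∈ q ∨ (y, x) ∈ q) :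
    C.image (rankC C q) = Finset.Icc 1 C.card := by
  apply Finset.eq_of_subset_of_card_le
  · intro i hi
    obtain ⟨c, hc, rfl⟩ := Finset.mem_image.1 hi
    exact Finset.mem_Icc.2 ⟨chainRank_pos hq hCS hc, chainRank_le_card⟩
  · rw [Finset.card_image_of_injOn (fun x hx y hy => chainRank_injOn hq hCS hC hx hy),
      Nat.card_Icc]
    omega

lemma chainRank_surj (hq : IsPOon S q) (hCS : C ⊆ S)
    (hC : ∀ x ∈ C, ∀ y ∈ C, (x, y) ∈ q ∨ (y, x) ∈ q) {i : ℕ} (h1 : 1 ≤ i)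
    (h2 : i ≤ C.card) : ∃ c ∈ C, rankC C q c = i := by
  have : i ∈ C.image (rankC C q) := by
    rw [chainRank_image hq hCS hC]
    exact Finset.mem_Icc.2 ⟨h1, h2⟩
  simpa using this

end rank

lemma initSegs_card (S : Finset α) (q : Finset (α × α)) (hq : IsPOon S q)
    (C : Finset α) (hCS : C ⊆ S)
    (hC : ∀ x ∈ C, ∀ y ∈ C, (x, y) ∈ q ∨ (y, x) ∈ q) :
    (initSegs C q).card = C.card + 1 := by
  have hfc : ∀ j, j ≤ C.card → (C.filter fun c => rankC C q c ≤ j).card = j := by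
    intro j hj
    have himg : (C.filter fun c => rankC C q c ≤ j).image (rankC C q) = Finset.Icc 1 j := by
      apply Finset.Subset.antisymm
      · intro i hi
        obtain ⟨c, hc, rfl⟩ := Finset.mem_image.1 hi
        rw [Finset.mem_filter] at hc
        exact Finset.mem_Icc.2 ⟨chainRank_pos hq hCS hc.1, hc.2⟩
      · intro i hi
        rw [Finset.mem_Icc] at hi
        obtain ⟨c, hc, rfl⟩ := chainRank_surj hq hCS hC hi.1 (le_trans hi.2 hj)
        exact Finset.mem_image.2 ⟨c, Finset.mem_filter.2 ⟨hc, hi.2⟩, rfl⟩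
    have hinj : Set.InjOn (rankC C q) ↑(C.filter fun c => rankC C q c ≤ j) := by
      intro x hx y hy hxy
      rw [Finset.mem_coe, Finset.mem_filter] at hx hy
      exact chainRank_injOn hq hCS hC hx.1 hy.1 hxy
    have := Finset.card_image_of_injOn hinj
    rw [himg, Nat.card_Icc] at this
    omega
  have hub : (initSegs C q).card ≤ (Finset.range (C.card + 1)).card := by
    apply Finset.card_le_card_of_injOn Finset.card (t := Finset.range (C.card + 1))
    · intro I hI
      rw [Finset.mem_coe, Finset.mem_range]
      have := Finset.card_le_card (mem_initSegs.1 hI).1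
      omega
    · intro I hI J hJ hcard
      rw [Finset.mem_coe] at hI hJ
      obtain ⟨hIC, hIseg⟩ := mem_initSegs.1 hI
      obtain ⟨hJC, hJseg⟩ := mem_initSegs.1 hJ
      have htot : I ⊆ J ∨ J ⊆ I := by
        by_contra hcon
        push_neg at hcon
        obtain ⟨x, hxI, hxJ⟩ := Finset.not_subset.1 hcon.1
        obtain ⟨y, hyJ, hyI⟩ := Finset.not_subset.1 hcon.2
        rcases hC x (hIC hxI) y (hJC hyJ) with h | h
        · exact hxJ (hJseg y hyJ x (hIC hxI) h)
        · exact hyI (hIseg x hxI y (hJC hyJ) h)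
      rcases htot with h | h
      · exact Finset.eq_of_subset_of_card_le h hcard.ge
      · exact (Finset.eq_of_subset_of_card_le h hcard.le).symm
  have hlb : (Finset.range (C.card + 1)).card ≤ (initSegs C q).card := by
    apply Finset.card_le_card_of_injOn (fun j => C.filter fun c => rankC C q c ≤ j)
      (s := Finset.range (C.card + 1))
    · intro j hj
      rw [Finset.mem_coe, Finset.mem_range] at hj
      refine mem_initSegs.2 ⟨Finset.filter_subset _ _, ?_⟩
      intro y hy x hx hxy
      rw [Finset.mem_filter] at hy ⊢
      refine ⟨hx, le_trans ?_ hy.2⟩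
      exact (chainRank_le_iff hq hCS hC hx hy.1).1 hxy
    · intro j1 hj1 j2 hj2 heq
      rw [Finset.mem_coe, Finset.mem_range] at hj1 hj2
      have e1 := hfc j1 (by omega)
      have e2 := hfc j2 (by omega)
      simp only [] at heq
      rw [heq, e2] at e1
      omega
  rw [Finset.card_range] at hub hlb
  omega



lemma sdiff_union_inter (D C : Finset α) : (D \ C) ∪ (D ∩ C) = D := by
  ext x; simp; tauto

lemma phi_maps {S C : Finset α} {q : Finset (α × α)} {D : Finset α}
    (hD : D ∈ downsets S q) :
    (D \ C, D ∩ C) ∈ (S \ C).powerset ×ˢ initSegs C q := by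
  obtain ⟨hDS, hDd⟩ := mem_downsets.1 hD
  rw [Finset.mem_product]
  constructor
  · rw [Finset.mem_powerset]
    intro x hx
    rw [Finset.mem_sdiff] at hx ⊢
    exact ⟨hDS hx.1, hx.2⟩
  · refine mem_initSegs.2 ⟨Finset.inter_subset_right, ?_⟩
    intro y hy x hx hxy
    rw [Finset.mem_inter] at hy ⊢
    exact ⟨hDd y hy.1 x hxy, hx⟩

lemma phi_injOn {S C : Finset α} {q : Finset (α × α)} :
    Set.InjOn (fun D => (D \ C, D ∩ C)) ↑(downsets S q) := by
  intro D1 _ D2 _ heq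
  simp only [Prod.mk.injEq] at heq
  rw [← sdiff_union_inter D1 C, ← sdiff_union_inter D2 C, heq.1, heq.2]

lemma dnum_le {S C : Finset α} {q : Finset (α × α)} :
    dnum S q ≤ ((S \ C).powerset ×ˢ initSegs C q).card :=
  Finset.card_le_card_of_injOn _ (fun D hD => phi_maps hD) phi_injOn

/-- If the poset splits as antichain ⊕ chain along `C`, the downsets biject
with pairs (subset of `S \ C`, initial segment of `C`). -/
lemma dnum_structure (S : Finset α) (q : Finset (α × α)) (hq : IsPOon S q)
    (C : Finset α) (hCS : C ⊆ S)
    (hC : ∀ x ∈ C, ∀ y ∈ C, (x, y) ∈ q ∨ (y, x) ∈ q)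
    (hcross : ∀ x y : α, (x, y) ∈ q → x ≠ y → x ∈ C ∧ y ∈ C) :
    dnum S q = 2 ^ (S \ C).card * (C.card + 1) := by
  have key : dnum S q = ((S \ C).powerset ×ˢ initSegs C q).card := by
    apply Finset.card_bij (fun D _ => (D \ C, D ∩ C)) (fun D hD => phi_maps hD)
      (fun D1 h1 D2 h2 heq => phi_injOn h1 h2 heq)
    rintro ⟨X, I⟩ hXI
    rw [Finset.mem_product, Finset.mem_powerset] at hXI
    obtain ⟨hX, hI⟩ := hXI
    obtain ⟨hIC, hIseg⟩ := mem_initSegs.1 hI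
    have hXC : ∀ x ∈ X, x ∉ C := fun x hx => (Finset.mem_sdiff.1 (hX hx)).2
    have hD : X ∪ I ∈ downsets S q := by
      refine mem_downsets.2 ⟨?_, ?_⟩
      · exact Finset.union_subset (fun x hx => (Finset.mem_sdiff.1 (hX hx)).1)
          (fun x hx => hCS (hIC hx))
      · intro y hy x hxy
        rcases eq_or_ne x y with rfl | hne
        · exact hy
        · obtain ⟨hxC, hyC⟩ := hcross x y hxy hne
          have hyI : y ∈ I := by
            rcases Finset.mem_union.1 hy with h | h
            · exact absurd hyC (hXC y h)
            · exact h
          exact Finset.mem_union_right _ (hIseg y hyI x hxC hxy)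
    refine ⟨X ∪ I, hD, ?_⟩
    have e1 : (X ∪ I) \ C = X := by
      ext a
      simp only [Finset.mem_sdiff, Finset.mem_union]
      constructor
      · rintro ⟨h1 | h1, h2⟩
        · exact h1
        · exact absurd (hIC h1) h2
      · intro h
        exact ⟨Or.inl h, hXC a h⟩
    have e2 : (X ∪ I) ∩ C = I := by
      ext a
      simp only [Finset.mem_inter, Finset.mem_union]
      constructor
      · rintro ⟨h1 | h1, h2⟩
        · exact absurd h2 (hXC a h1)
        · exact h1
      · intro h
        exact ⟨Or.inr h, hIC h⟩
    rw [e1, e2]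
  rw [key, Finset.card_product, Finset.card_powerset,
    initSegs_card S q hq C hCS hC]

/-- `dnum` is invariant under poset isomorphism. -/
lemma dnum_iso {β : Type*} [DecidableEq β] (S : Finset α) (q : Finset (α × α))
    (T : Finset β) (r : Finset (β × β)) (hq : q ⊆ S ×ˢ S) (hr : r ⊆ T ×ˢ T)
    (hiso : POIso S q T r) : dnum S q = dnum T r := by
  obtain ⟨f, hbij, hrel⟩ := hiso
  apply Finset.card_bij (fun D _ => D.image f)
  · intro D hD
    obtain ⟨hDS, hDd⟩ := mem_downsets.1 hD
    refine mem_downsets.2 ⟨?_, ?_⟩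
    · intro v hv
      obtain ⟨x, hx, rfl⟩ := Finset.mem_image.1 hv
      exact Finset.mem_coe.1 (hbij.1 (hDS hx))
    · intro v hv u huv
      obtain ⟨y, hy, rfl⟩ := Finset.mem_image.1 hv
      have huT : u ∈ T := (Finset.mem_product.1 (hr huv)).1
      obtain ⟨x, hxS, rfl⟩ := hbij.2.2 huT
      rw [Finset.mem_coe] at hxS
      have : (x, y) ∈ q := (hrel x hxS y (hDS hy)).2 huv
      exact Finset.mem_image_of_mem f (hDd y hy x this)
  · intro D1 h1 D2 h2 heq
    have hD1S := (mem_downsets.1 h1).1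
    have hD2S := (mem_downsets.1 h2).1
    apply Finset.Subset.antisymm <;> intro x hx
    · have : f x ∈ D2.image f := heq ▸ Finset.mem_image_of_mem f hx
      obtain ⟨y, hy, hfy⟩ := Finset.mem_image.1 this
      exact hbij.2.1 (hD2S hy) (hD1S hx) hfy ▸ hy
    · have : f x ∈ D1.image f := heq ▸ Finset.mem_image_of_mem f hx
      obtain ⟨y, hy, hfy⟩ := Finset.mem_image.1 this
      exact hbij.2.1 (hD1S hy) (hD2S hx) hfy ▸ hy
  · intro E hE
    obtain ⟨hET, hEd⟩ := mem_downsets.1 hE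
    refine ⟨S.filter fun x => f x ∈ E, ?_, ?_⟩
    · refine mem_downsets.2 ⟨Finset.filter_subset _ _, ?_⟩
      intro y hy x hxy
      rw [Finset.mem_filter] at hy ⊢
      have hxS : x ∈ S := (Finset.mem_product.1 (hq hxy)).1
      exact ⟨hxS, hEd (f y) hy.2 (f x) ((hrel x hxS y hy.1).1 hxy)⟩
    · apply Finset.Subset.antisymm
      · intro v hv
        obtain ⟨x, hx, rfl⟩ := Finset.mem_image.1 hv
        exact (Finset.mem_filter.1 hx).2
      · intro v hv
        obtain ⟨x, hxS, rfl⟩ := hbij.2.2 (hET hv)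
        rw [Finset.mem_coe] at hxS
        exact Finset.mem_image_of_mem f (Finset.mem_filter.2 ⟨hxS, hv⟩)

noncomputable def rcon (k h : ℕ) : Finset (ℕ × ℕ) :=
  ((Finset.range k).image fun i => (i, i)) ∪
    (((Finset.range k \ Finset.range (k - h)) ×ˢ
        (Finset.range k \ Finset.range (k - h))).filter
      fun r => r.1 ≤ r.2)

lemma mem_rcon {k h a b : ℕ} :
    (a, b) ∈ rcon k h ↔ (a = b ∧ a < k) ∨ (k - h ≤ a ∧ b < k ∧ a ≤ b) := by
  simp only [rcon, Finset.mem_union, Finset.mem_image, Finset.mem_filter,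
    Finset.mem_product, Finset.mem_sdiff, Finset.mem_range, Prod.mk.injEq]
  constructor
  · rintro (⟨i, hi, rfl, rfl⟩ | ⟨⟨⟨h1, h2⟩, h3, h4⟩, h5⟩)
    · exact Or.inl ⟨rfl, hi⟩
    · exact Or.inr ⟨by omega, h3, h5⟩
  · rintro (⟨rfl, h1⟩ | ⟨h1, h2, h3⟩)
    · exact Or.inl ⟨a, h1, rfl, rfl⟩
    · exact Or.inr ⟨⟨⟨by omega, by omega⟩, by omega, by omega⟩, h3⟩

lemma rcon_po (k h : ℕ) : IsPOon (Finset.range k) (rcon k h) := by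
  refine ⟨?_, ?_, ?_, ?_⟩
  · rintro ⟨a, b⟩ hp
    have := mem_rcon.1 hp
    simp only [Finset.mem_product, Finset.mem_range]
    omega
  · intro x hx
    exact mem_rcon.2 (Or.inl ⟨rfl, Finset.mem_range.1 hx⟩)
  · intro x y z h1 h2
    rw [mem_rcon] at h1 h2 ⊢
    omega
  · intro x y h1 h2
    rw [mem_rcon] at h1 h2
    omega

lemma iso_of_structure (S : Finset α) (q : Finset (α × α)) (hq : IsPOon S q)
    (C : Finset α) (hCS : C ⊆ S)
    (hC : ∀ x ∈ C, ∀ y ∈ C, (x, y) ∈ q ∨ (y, x) ∈ q)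
    (hcross : ∀ x y : α, (x, y) ∈ q → x ≠ y → x ∈ C ∧ y ∈ C)
    (k h : ℕ) (hk : S.card = k) (hh : C.card = h) :
    POIso S q (Finset.range k) (rcon k h) := by
  classical
  set A := S \ C with hAdef
  have hhk : h ≤ k := by rw [← hk, ← hh]; exact Finset.card_le_card hCS
  have hA : A.card = k - h := by rw [hAdef, Finset.card_sdiff_of_subset hCS, hk, hh]
  set f : α → ℕ := fun x =>
    if hx : x ∈ A then ((A.equivFin ⟨x, hx⟩ : Fin A.card) : ℕ)
    else k - h + (rankC C q x - 1) with hfdef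
  have hmemAC : ∀ x ∈ S, x ∉ A → x ∈ C := by
    intro x hx hxA
    by_contra hxC
    exact hxA (Finset.mem_sdiff.2 ⟨hx, hxC⟩)
  have hfA : ∀ x, (hx : x ∈ A) → f x < k - h := by
    intro x hx
    rw [hfdef]
    simp only [dif_pos hx]
    have := (A.equivFin ⟨x, hx⟩).2
    omega
  have hfC : ∀ x ∈ C, f x = k - h + (rankC C q x - 1) := by
    intro x hx
    rw [hfdef]
    have hxA : x ∉ A := fun hxA => (Finset.mem_sdiff.1 hxA).2 hx
    simp only [dif_neg hxA]
  have hrk1 : ∀ x ∈ C, 1 ≤ rankC C q x := fun x hx => chainRank_pos hq hCS hx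
  have hrkh : ∀ x ∈ C, rankC C q x ≤ h := fun x hx => hh ▸ (chainRank_le_card (C := C) (q := q) (x := x))
  have hfC2 : ∀ x ∈ C, k - h ≤ f x ∧ f x < k := by
    intro x hx
    have := hfC x hx
    have h1 := hrk1 x hx
    have h2 := hrkh x hx
    omega
  have hmapsTo : ∀ x ∈ S, f x < k := by
    intro x hx
    by_cases hxA : x ∈ A
    · have := hfA x hxA; omega
    · exact (hfC2 x (hmemAC x hx hxA)).2
  have hinj : ∀ x ∈ S, ∀ y ∈ S, f x = f y → x = y := by
    intro x hx y hy hfxy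
    by_cases hxA : x ∈ A <;> by_cases hyA : y ∈ A
    · have e1 : f x = ((A.equivFin ⟨x, hxA⟩ : Fin A.card) : ℕ) := by
        rw [hfdef]; simp only [dif_pos hxA]
      have e2 : f y = ((A.equivFin ⟨y, hyA⟩ : Fin A.card) : ℕ) := by
        rw [hfdef]; simp only [dif_pos hyA]
      rw [e1, e2] at hfxy
      have : A.equivFin ⟨x, hxA⟩ = A.equivFin ⟨y, hyA⟩ := Fin.ext hfxy
      have := A.equivFin.injective this
      exact congrArg Subtype.val this
    · have h1 := hfA x hxA
      have h2 := (hfC2 y (hmemAC y hy hyA)).1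
      omega
    · have h1 := hfA y hyA
      have h2 := (hfC2 x (hmemAC x hx hxA)).1
      omega
    · have hxC := hmemAC x hx hxA
      have hyC := hmemAC y hy hyA
      have e1 := hfC x hxC
      have e2 := hfC y hyC
      have h1 := hrk1 x hxC
      have h2 := hrk1 y hyC
      apply chainRank_injOn hq hCS hC hxC hyC
      omega
  refine ⟨f, ⟨?_, ?_, ?_⟩, ?_⟩
  · intro x hx
    rw [Finset.mem_coe] at hx
    simp only [Finset.coe_range, Set.mem_Iio]
    exact hmapsTo x hx
  · intro x hx y hy hfxy
    rw [Finset.mem_coe] at hx hy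
    exact hinj x hx y hy hfxy
  · intro n hn
    simp only [Finset.coe_range, Set.mem_Iio] at hn
    by_cases hn2 : n < k - h
    · have hn3 : n < A.card := by omega
      set xs := A.equivFin.symm ⟨n, hn3⟩ with hxdef
      refine ⟨(xs : α), Finset.mem_coe.2 ((Finset.mem_sdiff.1 xs.2).1), ?_⟩
      have e1 : f (xs : α) = ((A.equivFin ⟨(xs : α), xs.2⟩ : Fin A.card) : ℕ) := by
        rw [hfdef]; simp only [dif_pos xs.2]
      rw [e1]
      have e2 : (⟨(xs : α), xs.2⟩ : {x // x ∈ A}) = xs := Subtype.coe_eta xs xs.2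
      rw [e2, hxdef, Equiv.apply_symm_apply]
    · have h1 : 1 ≤ n - (k - h) + 1 := by omega
      have h2 : n - (k - h) + 1 ≤ C.card := by omega
      obtain ⟨c, hc, hrc⟩ := chainRank_surj hq hCS hC h1 h2
      refine ⟨c, Finset.mem_coe.2 (hCS hc), ?_⟩
      rw [hfC c hc, hrc]
      omega
  · intro x hx y hy
    rcases eq_or_ne x y with rfl | hne
    · exact iff_of_true (hq.2.1 x hx)
        (mem_rcon.2 (Or.inl ⟨rfl, hmapsTo x hx⟩))
    · have hf_ne : f x ≠ f y := fun hfe => hne (hinj x hx y hy hfe)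
      by_cases hxC : x ∈ C <;> by_cases hyC : y ∈ C
      · rw [chainRank_le_iff hq hCS hC hxC hyC, mem_rcon]
        have e1 := hfC x hxC
        have e2 := hfC y hyC
        have h1 := hrk1 x hxC
        have h2 := hrk1 y hyC
        have h3 := hrkh x hxC
        have h4 := hrkh y hyC
        omega
      · refine iff_of_false (fun hxy => hyC (hcross x y hxy hne).2) (fun hmem => ?_)
        rw [mem_rcon] at hmem
        have h1 := hfA y (Finset.mem_sdiff.2 ⟨hy, hyC⟩)
        have h2 := (hfC2 x hxC).1
        omega
      · refine iff_of_false (fun hxy => hxC (hcross x y hxy hne).1) (fun hmem => ?_)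
        rw [mem_rcon] at hmem
        have h1 := hfA x (Finset.mem_sdiff.2 ⟨hx, hxC⟩)
        omega
      · refine iff_of_false (fun hxy => hxC (hcross x y hxy hne).1) (fun hmem => ?_)
        rw [mem_rcon] at hmem
        have h1 := hfA x (Finset.mem_sdiff.2 ⟨hx, hxC⟩)
        omega


end Aux

/-- Corollary 3.6: a poset with `k` points and height `h ≥ 1` has at most
`2^{k−h}·(h+1)` downsets, with equality iff it is isomorphic to `A_{k−h} + C_h`. -/
theorem stmt_6 (S : Finset α) (q : Finset (α × α)) (hq : IsPOon S q)
    (k h : ℕ) (hk : S.card = k) (hh : heightP S q = h) (hh1 : 1 ≤ h) :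
    dnum S q ≤ 2 ^ (k - h) * (h + 1) ∧
    (dnum S q = 2 ^ (k - h) * (h + 1) ↔
      POIso S q (Finset.range k)
        (((Finset.range k).image fun i => (i, i)) ∪
          (((Finset.range k \ Finset.range (k - h)) ×ˢ
              (Finset.range k \ Finset.range (k - h))).filter
            fun r => r.1 ≤ r.2))) := by
  -- obtain a maximum chain `C`
  have hne : (S.powerset.filter (isChainOn S q)).Nonempty := by
    refine ⟨∅, Finset.mem_filter.2 ⟨Finset.empty_mem_powerset S, ?_, ?_⟩⟩
    · exact Finset.empty_subset S
    · intro x hx; simp at hx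
  obtain ⟨C, hCmem, hCsup⟩ := Finset.exists_mem_eq_sup _ hne Finset.card
  have hCS : C ⊆ S := Finset.mem_powerset.1 (Finset.mem_filter.1 hCmem).1
  have hC : ∀ x ∈ C, ∀ y ∈ C, (x, y) ∈ q ∨ (y, x) ∈ q :=
    ((Finset.mem_filter.1 hCmem).2).2
  have hCcard : C.card = h := by rw [← hh, heightP, hCsup]
  have hhk : h ≤ k := by rw [← hCcard, ← hk]; exact Finset.card_le_card hCS
  have hA : (S \ C).card = k - h := by rw [Finset.card_sdiff_of_subset hCS, hk, hCcard]
  have hprod : ((S \ C).powerset ×ˢ initSegs C q).card = 2 ^ (k - h) * (h + 1) := by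
    rw [Finset.card_product, Finset.card_powerset, hA,
      initSegs_card S q hq C hCS hC, hCcard]
  have hle : dnum S q ≤ 2 ^ (k - h) * (h + 1) := hprod ▸ dnum_le
  refine ⟨hle, ?_, ?_⟩
  · -- equality implies isomorphism
    intro heqv
    have himg : (downsets S q).image (fun D => (D \ C, D ∩ C)) =
        (S \ C).powerset ×ˢ initSegs C q := by
      apply Finset.eq_of_subset_of_card_le
      · exact Finset.image_subset_iff.2 (fun D hD => phi_maps hD)
      · rw [Finset.card_image_of_injOn phi_injOn]
        exact le_of_eq (hprod.trans heqv.symm)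
    have hcross : ∀ x y : α, (x, y) ∈ q → x ≠ y → x ∈ C ∧ y ∈ C := by
      intro x y hxy hne'
      have hxS : x ∈ S := (Finset.mem_product.1 (hq.1 hxy)).1
      have hyS : y ∈ S := (Finset.mem_product.1 (hq.1 hxy)).2
      by_contra hcon
      by_cases hyC : y ∈ C
      · have hxC : x ∉ C := fun hxC => hcon ⟨hxC, hyC⟩
        have hmem : ((∅ : Finset α), C) ∈ (S \ C).powerset ×ˢ initSegs C q := by
          rw [Finset.mem_product]
          exact ⟨Finset.empty_mem_powerset _,
            mem_initSegs.2 ⟨Finset.Subset.refl C, fun y hy x hx _ => hx⟩⟩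
        rw [← himg] at hmem
        obtain ⟨D, hD, hDe⟩ := Finset.mem_image.1 hmem
        simp only [Prod.mk.injEq] at hDe
        have hDC : D = C := by
          rw [← sdiff_union_inter D C, hDe.1, hDe.2, Finset.empty_union]
        have := (mem_downsets.1 hD).2 y (hDC ▸ hyC) x hxy
        rw [hDC] at this
        exact hxC this
      · have hmem : (({y} : Finset α), (∅ : Finset α)) ∈
            (S \ C).powerset ×ˢ initSegs C q := by
          rw [Finset.mem_product]
          refine ⟨Finset.mem_powerset.2 ?_, mem_initSegs.2 ⟨Finset.empty_subset _,
            fun y hy => by simp at hy⟩⟩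
          exact Finset.singleton_subset_iff.2 (Finset.mem_sdiff.2 ⟨hyS, hyC⟩)
        rw [← himg] at hmem
        obtain ⟨D, hD, hDe⟩ := Finset.mem_image.1 hmem
        simp only [Prod.mk.injEq] at hDe
        have hDy : D = {y} := by
          rw [← sdiff_union_inter D C, hDe.1, hDe.2, Finset.union_empty]
        have hyD : y ∈ D := by rw [hDy]; exact Finset.mem_singleton_self y
        have := (mem_downsets.1 hD).2 y hyD x hxy
        rw [hDy, Finset.mem_singleton] at this
        exact hne' this
    exact iso_of_structure S q hq C hCS hC hcross k h hk hCcard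
  · -- isomorphism implies equality
    intro hiso
    have hiso' : POIso S q (Finset.range k) (rcon k h) := hiso
    have h1 : dnum S q = dnum (Finset.range k) (rcon k h) :=
      dnum_iso S q _ _ hq.1 (rcon_po k h).1 hiso'
    set Ck := Finset.range k \ Finset.range (k - h) with hCkdef
    have hCk1 : Ck ⊆ Finset.range k := Finset.sdiff_subset
    have hCk2 : ∀ x ∈ Ck, ∀ y ∈ Ck, (x, y) ∈ rcon k h ∨ (y, x) ∈ rcon k h := by
      intro x hx y hy
      rw [hCkdef, Finset.mem_sdiff, Finset.mem_range, Finset.mem_range] at hx hy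
      rcases le_total x y with hle | hle
      · exact Or.inl (mem_rcon.2 (Or.inr ⟨by omega, by omega, hle⟩))
      · exact Or.inr (mem_rcon.2 (Or.inr ⟨by omega, by omega, hle⟩))
    have hCk3 : ∀ x y : ℕ, (x, y) ∈ rcon k h → x ≠ y → x ∈ Ck ∧ y ∈ Ck := by
      intro x y hxy hne'
      rw [mem_rcon] at hxy
      rw [hCkdef, Finset.mem_sdiff, Finset.mem_range, Finset.mem_range,
        Finset.mem_sdiff, Finset.mem_range, Finset.mem_range]
      omega
    have hCkcard : Ck.card = h := by
      rw [hCkdef, Finset.card_sdiff_of_subset (Finset.range_subset_range.2 (by omega)),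
        Finset.card_range, Finset.card_range]
      omega
    have hTk : (Finset.range k \ Ck).card = k - h := by
      have : Finset.range k \ Ck = Finset.range (k - h) := by
        ext a
        rw [hCkdef]
        simp only [Finset.mem_sdiff, Finset.mem_range]
        omega
      rw [this, Finset.card_range]
    rw [h1, dnum_structure (Finset.range k) (rcon k h) (rcon_po k h) Ck hCk1 hCk2 hCk3,
      hTk, hCkcard]
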